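/- arXiv:2603.05565 — 3 statements merged into one kernel-verified Lean document; each statement's English description precedes it below -/
import Mathlib

section
/- Let h be a real-valued random variable on a probability space with mean μ_h > 0 and variance σ_h² > 0, let φ > 0, α > 0 and β ≥ 0, and for A ≥ 0 define the partially multiplicative task output y_A = h·φ·(1 + β·A) + α·A. Then E[y_A] = μ_h·φ·(1 + β·A) + α·A, the standard deviation of y_A is σ_h·φ·(1 + β·A), the coefficient of variation is CV(A) = σ_h·φ·(1 + β·A)/(μ_h·φ·(1 + β·A) + α·A), and CV is differentiable with CV′(A) = −σ_h·φ·α/(μ_h·φ·(1 + β·A) + α·A)² < 0; hence CV is strictly decreasing on [0,∞) for every β ≥ 0, so skill homogenization survives partial multiplicative complementarity whenever the additive AI component α is positive. (Proposition 2, homogenization under the general specification.) -/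
open MeasureTheory ProbabilityTheory Set

lemma variance_add_const' {Ω : Type*} [MeasureSpace Ω] [IsProbabilityMeasure (ℙ : Measure Ω)]
    (X : Ω → ℝ) (hX : Integrable X ℙ) (c : ℝ) :
    variance (fun ω => X ω + c) ℙ = variance X ℙ := by
  unfold variance evariance
  have hint : ∫ ω, (X ω + c) = (∫ ω, X ω) + c := by
    rw [integral_add hX (integrable_const c)]; simp
  congr 1
  refine lintegral_congr fun ω => ?_
  rw [hint]
  ring_nf

/-- Proposition 2 (homogenization under the partially multiplicative specification):
for `y_A = h·φ·(1+β·A) + α·A`, the mean is `μ_h·φ·(1+β·A) + α·A`, the standard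
deviation is `σ_h·φ·(1+β·A)`, the coefficient of variation
`CV(A) = σ_h·φ·(1+β·A)/(μ_h·φ·(1+β·A) + α·A)` has derivative
`−σ_h·φ·α/(μ_h·φ·(1+β·A) + α·A)² < 0`, and `CV` is strictly decreasing on `[0,∞)`. -/
theorem homogenization_general
    {Ω : Type*} [MeasureSpace Ω] [IsProbabilityMeasure (ℙ : Measure Ω)]
    (h : Ω → ℝ) (hmem : MemLp h 2)
    (μh σh φ α β : ℝ)
    (hμ : μh = ∫ ω, h ω) (hσ : σh ^ 2 = variance h ℙ)
    (hσpos : 0 < σh) (hμpos : 0 < μh) (hφ : 0 < φ) (hα : 0 < α) (hβ : 0 ≤ β) :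
    (∀ A : ℝ, 0 ≤ A →
      (∫ ω, (h ω * φ * (1 + β * A) + α * A)) = μh * φ * (1 + β * A) + α * A ∧
      Real.sqrt (variance (fun ω => h ω * φ * (1 + β * A) + α * A) ℙ) =
        σh * φ * (1 + β * A) ∧
      HasDerivAt (fun A : ℝ => σh * φ * (1 + β * A) / (μh * φ * (1 + β * A) + α * A))
        (-(σh * φ * α) / (μh * φ * (1 + β * A) + α * A) ^ 2) A ∧
      -(σh * φ * α) / (μh * φ * (1 + β * A) + α * A) ^ 2 < 0) ∧
    StrictAntiOn (fun A : ℝ => σh * φ * (1 + β * A) / (μh * φ * (1 + β * A) + α * A))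
      (Ici 0) := by
  have hint : Integrable h ℙ := hmem.integrable one_le_two
  have hDpos : ∀ A : ℝ, 0 ≤ A → 0 < μh * φ * (1 + β * A) + α * A := by
    intro A hA
    have h1 : (0:ℝ) < 1 + β * A := by positivity
    have := mul_pos (mul_pos hμpos hφ) h1
    nlinarith [mul_nonneg hα.le hA]
  have hderiv : ∀ A : ℝ, 0 ≤ A →
      HasDerivAt (fun A : ℝ => σh * φ * (1 + β * A) / (μh * φ * (1 + β * A) + α * A))
        (-(σh * φ * α) / (μh * φ * (1 + β * A) + α * A) ^ 2) A := by
    intro A hA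
    have hlin : HasDerivAt (fun A : ℝ => 1 + β * A) β A := by
      simpa using ((hasDerivAt_id A).const_mul β).const_add 1
    have hN : HasDerivAt (fun A : ℝ => σh * φ * (1 + β * A)) (σh * φ * β) A :=
      hlin.const_mul (σh * φ)
    have hD : HasDerivAt (fun A : ℝ => μh * φ * (1 + β * A) + α * A)
        (μh * φ * β + α) A := by
      have := (hlin.const_mul (μh * φ)).add ((hasDerivAt_id A).const_mul α)
      simp only [mul_one] at this; exact this
    have hne := (hDpos A hA).ne'
    have := hN.div hD hne
    refine this.congr_deriv ?_
    rw [div_left_inj' (pow_ne_zero 2 hne)]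
    ring
  constructor
  · intro A hA
    refine ⟨?_, ?_, hderiv A hA, ?_⟩
    · have : ∫ ω, (h ω * φ * (1 + β * A) + α * A) =
          (∫ ω, h ω) * (φ * (1 + β * A)) + α * A := by
        rw [integral_add ((hint.mul_const φ).mul_const (1 + β * A)) (integrable_const _)]
        simp [integral_mul_const, mul_assoc]
      rw [this, ← hμ]; ring
    · have hv : variance (fun ω => h ω * φ * (1 + β * A) + α * A) ℙ =
          (φ * (1 + β * A)) ^ 2 * variance h ℙ := by
        rw [variance_add_const' (fun ω => h ω * φ * (1 + β * A))
          ((hint.mul_const φ).mul_const (1 + β * A)) (α * A)]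
        rw [show (fun ω => h ω * φ * (1 + β * A)) = fun ω => (φ * (1 + β * A)) * h ω by
          funext ω; ring]
        exact variance_const_mul _ h ℙ
      have h1 : (0:ℝ) < 1 + β * A := by positivity
      rw [hv, ← hσ, show (φ * (1 + β * A)) ^ 2 * σh ^ 2 = (σh * φ * (1 + β * A)) ^ 2 by ring]
      exact Real.sqrt_sq (by positivity)
    · apply div_neg_of_neg_of_pos
      · have : 0 < σh * φ * α := by positivity
        linarith
      · exact pow_pos (hDpos A hA) 2
  · apply strictAntiOn_of_deriv_neg (convex_Ici 0)
    · intro A hA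
      exact (hderiv A hA).continuousAt.continuousWithinAt
    · intro A hA
      rw [interior_Ici] at hA
      rw [(hderiv A hA.le).deriv]
      apply div_neg_of_neg_of_pos
      · have : 0 < σh * φ * α := by positivity
        linarith
      · exact pow_pos (hDpos A hA.le) 2
end

section
/- Let n ≥ 2, σ > 0 with σ ≠ 1, and fix i ≠ j and positive values of all task outputs other than y_j. Then the marginal product of task i, p_i(y) = ∂Y/∂y_i = (Y(y)/y_i)^{1/σ}, is a strictly increasing function of y_j on (0,∞). Hence when AI raises output on augmentable tasks, the competitive price of every non-augmented task strictly rises. (Proposition 3(c), rising prices of tasks outside the AI-augmentable set.) -/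
open Set

/-- The CES aggregator `Y(y) = (Σ_i y_i^{(σ−1)/σ})^{σ/(σ−1)}`. -/
noncomputable def cesAggregate (n : ℕ) (σ : ℝ) (y : Fin n → ℝ) : ℝ :=
  (∑ i, y i ^ ((σ - 1) / σ)) ^ (σ / (σ - 1))

/-- Proposition 3(c) (rising prices of non-augmented tasks): for `σ > 0`, `σ ≠ 1`
and `i ≠ j`, the marginal product of task `i`, `p_i(y) = (Y(y)/y_i)^{1/σ}`, is a
strictly increasing function of `y_j` on `(0,∞)`. -/
theorem cross_task_price_rises
    (n : ℕ) (hn : 2 ≤ n) (σ : ℝ) (hσ : 0 < σ) (hσ1 : σ ≠ 1)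
    (i j : Fin n) (hij : i ≠ j)
    (y : Fin n → ℝ) (hy : ∀ k, k ≠ j → 0 < y k) :
    StrictMonoOn
      (fun t : ℝ => (cesAggregate n σ (Function.update y j t) / y i) ^ (1 / σ))
      (Ioi 0) := by
  have hyi : 0 < y i := hy i hij
  set ρ : ℝ := (σ - 1) / σ with hρ
  have hρ0 : ρ ≠ 0 := by
    simp only [hρ, div_ne_zero_iff]
    exact ⟨sub_ne_zero.2 hσ1, ne_of_gt hσ⟩
  -- sum splits
  have hsum : ∀ t : ℝ, (∑ k, (Function.update y j t) k ^ ρ)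
      = t ^ ρ + ∑ k ∈ Finset.univ.erase j, y k ^ ρ := by
    intro t
    rw [← Finset.add_sum_erase _ _ (Finset.mem_univ j)]
    congr 1
    · simp
    · exact Finset.sum_congr rfl fun k hk => by
        rw [Function.update_of_ne (Finset.ne_of_mem_erase hk)]
  have hCnonneg : 0 ≤ ∑ k ∈ Finset.univ.erase j, y k ^ ρ := by
    apply Finset.sum_nonneg
    intro k hk
    exact le_of_lt (Real.rpow_pos_of_pos (hy k (Finset.ne_of_mem_erase hk)) _)
  set C : ℝ := ∑ k ∈ Finset.univ.erase j, y k ^ ρ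
  -- key: S(t) = t^ρ + C and Y strictly increasing
  have key : ∀ a b : ℝ, 0 < a → a < b →
      cesAggregate n σ (Function.update y j a) < cesAggregate n σ (Function.update y j b) := by
    intro a b ha hab
    have hb : 0 < b := ha.trans hab
    unfold cesAggregate
    rw [hsum a, hsum b]
    have hSa : 0 < a ^ ρ + C := by positivity
    have hSb : 0 < b ^ ρ + C := by positivity
    rcases lt_or_gt_of_ne hσ1 with hlt | hgt
    · -- σ < 1 : ρ < 0, exponent σ/(σ-1) < 0
      have hρneg : ρ < 0 := div_neg_of_neg_of_pos (by linarith) hσ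
      have hexp : σ / (σ - 1) < 0 := div_neg_of_pos_of_neg hσ (by linarith)
      have hS : b ^ ρ + C < a ^ ρ + C :=
        add_lt_add_left (Real.rpow_lt_rpow_of_neg ha hab hρneg) C
      exact Real.rpow_lt_rpow_of_neg hSb hS hexp
    · -- σ > 1
      have hρpos : 0 < ρ := div_pos (by linarith) hσ
      have hexp : 0 < σ / (σ - 1) := div_pos hσ (by linarith)
      have hS : a ^ ρ + C < b ^ ρ + C :=
        add_lt_add_left (Real.rpow_lt_rpow ha.le hab hρpos) C
      exact Real.rpow_lt_rpow hSa.le hS hexp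
  intro a ha b hb hab
  have ha' : (0:ℝ) < a := ha
  have hYa : 0 < cesAggregate n σ (Function.update y j a) := by
    unfold cesAggregate
    rw [hsum a]
    have : 0 < a ^ ρ + C := by positivity
    positivity
  have h := key a b ha' hab
  have hq : cesAggregate n σ (Function.update y j a) / y i
      < cesAggregate n σ (Function.update y j b) / y i :=
    (div_lt_div_iff_of_pos_right hyi).2 h
  exact Real.rpow_lt_rpow (div_nonneg hYa.le hyi.le) hq (by positivity)
end

section
/- Let n ≥ 2, σ > 1, and fix positive values of all task outputs other than y_j. Then the own marginal product of task j, p_j(y) = ∂Y/∂y_j = (Y(y)/y_j)^{1/σ}, is a strictly decreasing function of y_j on (0,∞). Hence when σ > 1 and AI raises output y_j on an augmentable task, the competitive price of that task strictly falls, reducing the human-capital-weighted task price index on AI-augmented tasks. (Proposition 3(a), declining prices of AI-augmented tasks when tasks are gross substitutes.) -/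
open Set

/-- Proposition 3(a) (declining prices of AI-augmented tasks under gross
substitutes): for `σ > 1`, the own marginal product of task `j`,
`p_j(y) = (Y(y)/y_j)^{1/σ}`, is a strictly decreasing function of `y_j` on
`(0,∞)`. -/
theorem own_task_price_falls
    (n : ℕ) (hn : 2 ≤ n) (σ : ℝ) (hσ : 1 < σ)
    (j : Fin n) (y : Fin n → ℝ) (hy : ∀ k, k ≠ j → 0 < y k) :
    StrictAntiOn
      (fun t : ℝ => (cesAggregate n σ (Function.update y j t) / t) ^ (1 / σ))
      (Ioi 0) := by
  have hσ0 : (0:ℝ) < σ := lt_trans one_pos hσ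
  have hσ1 : (0:ℝ) < σ - 1 := by linarith
  set r : ℝ := (σ - 1) / σ with hr
  have hr0 : 0 < r := div_pos hσ1 hσ0
  set S : ℝ := ∑ i ∈ Finset.univ \ {j}, y i ^ r with hS
  have hS0 : 0 < S := by
    have hnt : Nontrivial (Fin n) := Fin.nontrivial_iff_two_le.mpr hn
    obtain ⟨k, hk⟩ := exists_ne j
    apply Finset.sum_pos
    · intro i hi
      have hij : i ≠ j := by
        simp only [Finset.mem_sdiff, Finset.mem_singleton] at hi
        exact hi.2
      exact Real.rpow_pos_of_pos (hy i hij) r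
    · exact ⟨k, by simp [hk]⟩
  have hsum : ∀ t : ℝ, (∑ i, Function.update y j t i ^ r) = t ^ r + S := by
    intro t
    have heq : (fun i => Function.update y j t i ^ r) =
        Function.update (fun i => y i ^ r) j (t ^ r) := by
      funext i
      by_cases h : i = j <;> simp [h, Function.update]
    rw [heq, Finset.sum_update_of_mem (Finset.mem_univ j)]
  have key : ∀ t ∈ Ioi (0:ℝ),
      (cesAggregate n σ (Function.update y j t) / t) ^ (1/σ)
        = (S / t ^ r + 1) ^ (1/(σ-1)) := by
    intro t ht
    have ht0 : (0:ℝ) < t := ht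
    have htr : 0 < t ^ r := Real.rpow_pos_of_pos ht0 r
    have hA : 0 < t ^ r + S := by positivity
    simp only [cesAggregate, ← hr, hsum t]
    rw [show S / t^r + 1 = (t^r + S)/t^r by field_simp; ring]
    rw [Real.div_rpow hA.le htr.le,
        Real.div_rpow (Real.rpow_nonneg hA.le _) ht0.le]
    congr 1
    · rw [← Real.rpow_mul hA.le]
      congr 1
      field_simp
    · rw [← Real.rpow_mul ht0.le]
      congr 1
      rw [hr]
      field_simp
  intro a ha b hb hab
  simp only
  rw [key a ha, key b hb]
  have ha0 : (0:ℝ) < a := ha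
  have hb0 : (0:ℝ) < b := hb
  have har : 0 < a ^ r := Real.rpow_pos_of_pos ha0 r
  have hbr : 0 < b ^ r := Real.rpow_pos_of_pos hb0 r
  have hrlt : a ^ r < b ^ r := Real.rpow_lt_rpow ha0.le hab hr0
  have hdiv : S / b ^ r < S / a ^ r := div_lt_div_of_pos_left hS0 har hrlt
  have hbase : (0:ℝ) ≤ S / b ^ r + 1 := by positivity
  exact Real.rpow_lt_rpow hbase (by linarith) (by positivity)
end
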